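/- Fix an integer N ≥ 1, a constant C₀ > 0 and β ∈ (0,1). Then there exists L₀ > 0 such that for all L ≥ L₀ the following holds: for every N×N real matrix D with ‖D‖ ≤ C₀·L and |det D| ≥ L^{N-(1-β)}, and every linear map G : ℝ^N → ℝ^N with ‖G‖ ≤ 1/10, one has |det(D − G)| ≥ (1/2)·L^{N-(1-β)}. -/

import Mathlib

open scoped Real

private lemma euclid_abs_apply_le_norm {N : ℕ} (x : EuclideanSpace ℝ (Fin N)) (i : Fin N) :
    |x i| ≤ ‖x‖ := by
  rw [EuclideanSpace.norm_eq, ← Real.sqrt_sq_eq_abs]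
  apply Real.sqrt_le_sqrt
  have := Finset.single_le_sum (f := fun j => ‖x j‖ ^ 2) (fun j _ => sq_nonneg _)
    (Finset.mem_univ i)
  simpa [Real.norm_eq_abs, sq_abs] using this

private lemma det_mm_bound (N : ℕ) (m : Fin N → Fin N → ℝ) :
    ‖Matrix.detRowAlternating.toMultilinearMap m‖ ≤ (Nat.factorial N : ℝ) * ∏ i, ‖m i‖ := by
  have hdef : Matrix.detRowAlternating.toMultilinearMap m = (Matrix.of m).det := rfl
  rw [hdef, Matrix.det_apply]
  calc ‖∑ σ : Equiv.Perm (Fin N), Equiv.Perm.sign σ • ∏ i, Matrix.of m (σ i) i‖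
      ≤ ∑ σ : Equiv.Perm (Fin N), ‖Equiv.Perm.sign σ • ∏ i, Matrix.of m (σ i) i‖ :=
        norm_sum_le _ _
    _ ≤ ∑ _σ : Equiv.Perm (Fin N), ∏ i, ‖m i‖ := by
        refine Finset.sum_le_sum fun σ _ => ?_
        have h1 : ‖Equiv.Perm.sign σ • ∏ i, Matrix.of m (σ i) i‖ = |∏ i, m (σ i) i| := by
          rcases Int.units_eq_one_or (Equiv.Perm.sign σ) with h | h <;>
            simp [h, Units.smul_def, Real.norm_eq_abs, Matrix.of_apply, ← Finset.abs_prod]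
        rw [h1]
        calc |∏ i, m (σ i) i| ≤ ∏ i, ‖m (σ i)‖ := by
              rw [Finset.abs_prod]
              exact Finset.prod_le_prod (fun i _ => abs_nonneg _)
                (fun i _ => by
                  simpa [Real.norm_eq_abs] using norm_le_pi_norm (m (σ i)) i)
          _ = ∏ i, ‖m i‖ := Equiv.prod_comp σ (fun i => ‖m i‖)
    _ = (Nat.factorial N : ℝ) * ∏ i, ‖m i‖ := by
        rw [Finset.sum_const, nsmul_eq_mul]
        congr 1
        simp [Fintype.card_perm]

private lemma det_sub_le (N : ℕ) (A B : Fin N → Fin N → ℝ) :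
    |(Matrix.of A).det - (Matrix.of B).det| ≤
      (Nat.factorial N : ℝ) * N * max ‖A‖ ‖B‖ ^ (N - 1) * ‖A - B‖ := by
  have h := Matrix.detRowAlternating.toMultilinearMap.norm_image_sub_le_of_bound
    (C := (Nat.factorial N : ℝ)) (by positivity) (det_mm_bound N) A B
  simp [Real.norm_eq_abs, Fintype.card_fin] at h
  exact h

set_option synthInstance.maxHeartbeats 1000000
set_option maxHeartbeats 2000000

/-- Determinant lower bound in the hyperbolicity lemma (b)(ii): for `L` large,
if `‖D‖ ≤ C₀ L`, `|det D| ≥ L^(N-(1-β))` and `‖G‖ ≤ 1/10`, then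
`|det (D - G)| ≥ (1/2) L^(N-(1-β))`. -/
theorem statement2 (N : ℕ) (hN : 1 ≤ N) (C₀ : ℝ) (hC₀ : 0 < C₀)
    (β : ℝ) (hβ : β ∈ Set.Ioo (0 : ℝ) 1) :
    ∃ L₀ : ℝ, 0 < L₀ ∧ ∀ L : ℝ, L₀ ≤ L →
      ∀ D G : EuclideanSpace ℝ (Fin N) →L[ℝ] EuclideanSpace ℝ (Fin N),
        ‖D‖ ≤ C₀ * L →
        L ^ ((N : ℝ) - (1 - β)) ≤
          |LinearMap.det (D : EuclideanSpace ℝ (Fin N) →ₗ[ℝ] EuclideanSpace ℝ (Fin N))| →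
        ‖G‖ ≤ 1 / 10 →
        (1 / 2) * L ^ ((N : ℝ) - (1 - β)) ≤
          |LinearMap.det ((D - G : EuclideanSpace ℝ (Fin N) →L[ℝ] EuclideanSpace ℝ (Fin N)) :
            EuclideanSpace ℝ (Fin N) →ₗ[ℝ] EuclideanSpace ℝ (Fin N))| := by
  obtain ⟨hβ0, hβ1⟩ := hβ
  set K : ℝ := (Nat.factorial N : ℝ) * N * (C₀ + 1) ^ (N - 1) * (1 / 10) + 1 with hKdef
  have hKpos : 0 < K := by positivity
  clear_value K
  have hLpos : (0:ℝ) < max 1 ((2 * K) ^ (1 / β)) := lt_of_lt_of_le one_pos (le_max_left _ _)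
  refine ⟨max 1 ((2 * K) ^ (1 / β)), hLpos, fun L hL D G hD hdet hG => ?_⟩
  have hL1 : (1:ℝ) ≤ L := le_trans (le_max_left _ _) hL
  have hL0 : (0:ℝ) < L := lt_of_lt_of_le one_pos hL1
  -- the key power inequality: 2K ≤ L^β
  have h2K : 2 * K ≤ L ^ β := by
    have h2Kpos : (0:ℝ) < 2 * K := by positivity
    have hLe : (2 * K) ^ (1 / β) ≤ L := le_trans (le_max_right _ _) hL
    calc 2 * K = ((2 * K) ^ (1 / β)) ^ β := by
          rw [← Real.rpow_mul h2Kpos.le, one_div, inv_mul_cancel₀ hβ0.ne', Real.rpow_one]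
      _ ≤ L ^ β := Real.rpow_le_rpow (Real.rpow_nonneg h2Kpos.le _) hLe hβ0.le
  -- split the exponent
  have hexp : L ^ ((N : ℝ) - (1 - β)) = L ^ (N - 1) * L ^ β := by
    have : ((N : ℝ) - (1 - β)) = ((N - 1 : ℕ) : ℝ) + β := by
      push_cast [Nat.cast_sub hN]; ring
    rw [this, Real.rpow_add hL0, Real.rpow_natCast]
  -- matrices
  set b := (EuclideanSpace.basisFun (Fin N) ℝ).toBasis with hb
  have entry : ∀ (f : EuclideanSpace ℝ (Fin N) →L[ℝ] EuclideanSpace ℝ (Fin N)) (i j : Fin N),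
      |LinearMap.toMatrix b b (f : EuclideanSpace ℝ (Fin N) →ₗ[ℝ] EuclideanSpace ℝ (Fin N)) i j|
        ≤ ‖f‖ := by
    intro f i j
    rw [LinearMap.toMatrix_apply]
    have h1 : ∀ y : EuclideanSpace ℝ (Fin N), b.repr y i = y i := fun y => by
      rw [hb, OrthonormalBasis.coe_toBasis_repr_apply, EuclideanSpace.basisFun_repr]
    rw [h1]
    show |(f (b j)) i| ≤ ‖f‖
    calc |(f (b j)) i| ≤ ‖f (b j)‖ := euclid_abs_apply_le_norm _ _
      _ ≤ ‖f‖ * ‖b j‖ := f.le_opNorm _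
      _ = ‖f‖ := by
          rw [hb, OrthonormalBasis.coe_toBasis,
            (EuclideanSpace.basisFun (Fin N) ℝ).orthonormal.1 j, mul_one]
  set MA : Fin N → Fin N → ℝ := fun i j =>
    LinearMap.toMatrix b b (D : EuclideanSpace ℝ (Fin N) →ₗ[ℝ] EuclideanSpace ℝ (Fin N)) i j
    with hMA
  set MB : Fin N → Fin N → ℝ := fun i j =>
    LinearMap.toMatrix b b
      ((D - G : EuclideanSpace ℝ (Fin N) →L[ℝ] EuclideanSpace ℝ (Fin N)) :
        EuclideanSpace ℝ (Fin N) →ₗ[ℝ] EuclideanSpace ℝ (Fin N)) i j with hMB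
  have hdetA : (Matrix.of MA).det =
      LinearMap.det (D : EuclideanSpace ℝ (Fin N) →ₗ[ℝ] EuclideanSpace ℝ (Fin N)) := by
    rw [← LinearMap.det_toMatrix b]; rfl
  have hdetB : (Matrix.of MB).det =
      LinearMap.det ((D - G : EuclideanSpace ℝ (Fin N) →L[ℝ] EuclideanSpace ℝ (Fin N)) :
        EuclideanSpace ℝ (Fin N) →ₗ[ℝ] EuclideanSpace ℝ (Fin N)) := by
    rw [← LinearMap.det_toMatrix b]; rfl
  -- norm bounds
  have hC0L : (0:ℝ) ≤ C₀ * L := by positivity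
  have hnA : ‖MA‖ ≤ C₀ * L := by
    rw [pi_norm_le_iff_of_nonneg hC0L]
    intro i
    rw [pi_norm_le_iff_of_nonneg hC0L]
    intro j
    exact le_trans (by simpa [Real.norm_eq_abs] using (entry D i j)) hD
  have hDG : ‖D - G‖ ≤ C₀ * L + 1 / 10 :=
    le_trans (norm_sub_le D G) (add_le_add hD hG)
  have hnB : ‖MB‖ ≤ C₀ * L + 1 / 10 := by
    have hpos : (0:ℝ) ≤ C₀ * L + 1 / 10 := by positivity
    rw [pi_norm_le_iff_of_nonneg hpos]
    intro i
    rw [pi_norm_le_iff_of_nonneg hpos]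
    intro j
    exact le_trans ((Real.norm_eq_abs _).trans_le (entry (D - G) i j)) hDG
  have hsub : ∀ i j, (MA - MB) i j =
      LinearMap.toMatrix b b (G : EuclideanSpace ℝ (Fin N) →ₗ[ℝ] EuclideanSpace ℝ (Fin N)) i j := by
    intro i j
    have : ((D : EuclideanSpace ℝ (Fin N) →ₗ[ℝ] EuclideanSpace ℝ (Fin N)) -
        ((D - G : EuclideanSpace ℝ (Fin N) →L[ℝ] EuclideanSpace ℝ (Fin N)) :
          EuclideanSpace ℝ (Fin N) →ₗ[ℝ] EuclideanSpace ℝ (Fin N))) =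
        (G : EuclideanSpace ℝ (Fin N) →ₗ[ℝ] EuclideanSpace ℝ (Fin N)) := by
      ext x
      simp
    simp only [Pi.sub_apply, hMA, hMB]
    rw [← this, map_sub]
    simp [Matrix.sub_apply]
  have hnAB : ‖MA - MB‖ ≤ 1 / 10 := by
    rw [pi_norm_le_iff_of_nonneg (by norm_num : (0:ℝ) ≤ 1/10)]
    intro i
    rw [pi_norm_le_iff_of_nonneg (by norm_num : (0:ℝ) ≤ 1/10)]
    intro j
    rw [Real.norm_eq_abs, hsub i j]
    exact le_trans (entry G i j) hG
  -- Lipschitz bound on det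
  have hmax : max ‖MA‖ ‖MB‖ ≤ (C₀ + 1) * L := by
    have h10 : C₀ * L + 1 / 10 ≤ (C₀ + 1) * L := by nlinarith
    exact max_le (le_trans hnA (by nlinarith)) (le_trans hnB h10)
  have hlip : |(Matrix.of MA).det - (Matrix.of MB).det| ≤
      (Nat.factorial N : ℝ) * N * ((C₀ + 1) * L) ^ (N - 1) * (1 / 10) := by
    refine le_trans (det_sub_le N MA MB) ?_
    have h1 : max ‖MA‖ ‖MB‖ ^ (N - 1) ≤ ((C₀ + 1) * L) ^ (N - 1) :=
      pow_le_pow_left₀ (le_max_of_le_left (norm_nonneg _)) hmax _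
    have h2 : (0:ℝ) ≤ (Nat.factorial N : ℝ) * N := by positivity
    calc (Nat.factorial N : ℝ) * N * max ‖MA‖ ‖MB‖ ^ (N - 1) * ‖MA - MB‖
        ≤ (Nat.factorial N : ℝ) * N * ((C₀ + 1) * L) ^ (N - 1) * ‖MA - MB‖ := by
          apply mul_le_mul_of_nonneg_right _ (norm_nonneg _)
          exact mul_le_mul_of_nonneg_left h1 h2
      _ ≤ (Nat.factorial N : ℝ) * N * ((C₀ + 1) * L) ^ (N - 1) * (1 / 10) := by
          apply mul_le_mul_of_nonneg_left hnAB (by positivity)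
  -- bound the error by K * L^(N-1)
  have herr : (Nat.factorial N : ℝ) * N * ((C₀ + 1) * L) ^ (N - 1) * (1 / 10) ≤ K * L ^ (N - 1) := by
    rw [mul_pow]
    have hLp : (0:ℝ) ≤ L ^ (N - 1) := by positivity
    have : (Nat.factorial N : ℝ) * N * ((C₀ + 1) ^ (N - 1) * L ^ (N - 1)) * (1 / 10) =
        ((Nat.factorial N : ℝ) * N * (C₀ + 1) ^ (N - 1) * (1 / 10)) * L ^ (N - 1) := by ring
    rw [this]
    apply mul_le_mul_of_nonneg_right _ hLp
    simp [hKdef]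
  have hhalf : K * L ^ (N - 1) ≤ (1 / 2) * L ^ ((N : ℝ) - (1 - β)) := by
    rw [hexp]
    have hLp : (0:ℝ) ≤ L ^ (N - 1) := by positivity
    have hK2 : K ≤ 1 / 2 * L ^ β := by linarith
    calc K * L ^ (N - 1) ≤ (1 / 2 * L ^ β) * L ^ (N - 1) :=
          mul_le_mul_of_nonneg_right hK2 hLp
      _ = 1 / 2 * (L ^ (N - 1) * L ^ β) := by ring
  -- conclude
  have htri : |(Matrix.of MA).det| - |(Matrix.of MB).det| ≤
      |(Matrix.of MA).det - (Matrix.of MB).det| := abs_sub_abs_le_abs_sub _ _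
  rw [← hdetB]
  rw [← hdetA] at hdet
  have hchain : |(Matrix.of MA).det - (Matrix.of MB).det| ≤ (1/2) * L ^ ((N : ℝ) - (1 - β)) :=
    le_trans hlip (le_trans herr hhalf)
  linarith
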